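/- Let Γ be an oriented connected graph free from separating edges. Then the inclusion of the first homology H₁(Γ,ℤ) into the space of 1-chains C₁(Γ,ℤ) factors through the direct sum over all C1-sets S of H₁(Γ(S),ℤ), i.e. H₁(Γ,ℤ) ↪ ⊕_{S ∈ Set¹Γ} H₁(Γ(S),ℤ) ↪ C₁(Γ,ℤ), where each map is injective. -/

import Mathlib

/-- A finite oriented multigraph: each edge has a source and a target vertex. -/
structure OrGraph (V E : Type) where
  src : E → V
  tgt : E → V

namespace OrGraph

variable {V E : Type} (G : OrGraph V E)

def adjOn (F : Set E) (v w : V) : Prop :=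
  ∃ e ∈ F, (G.src e = v ∧ G.tgt e = w) ∨ (G.src e = w ∧ G.tgt e = v)

def ConnectedOn (F : Set E) : Prop := ∀ v w : V, Relation.ReflTransGen (G.adjOn F) v w

def Connected : Prop := G.ConnectedOn Set.univ

def Bridgeless : Prop := ∀ e : E, G.ConnectedOn ({e} : Set E)ᶜ

def SameC1 (e f : E) : Prop := e = f ∨ ¬ G.ConnectedOn ({e, f} : Set E)ᶜ

def IsC1Set (S : Set E) : Prop := ∃ e : E, S = {f | G.SameC1 e f}

def compRel (S : Set E) (v w : V) : Prop :=
  ∃ e ∉ S, (G.src e = v ∧ G.tgt e = w) ∨ (G.src e = w ∧ G.tgt e = v)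

/-- The contraction Γ(S): contract all edges not in S; vertices are the connected
components of Γ \ S, edges are S, with the induced orientation. -/
def contract (S : Set E) : OrGraph (Quot (G.compRel S)) {e // e ∈ S} :=
  ⟨fun e => Quot.mk (G.compRel S) (G.src e.1), fun e => Quot.mk (G.compRel S) (G.tgt e.1)⟩

/-- The subgraph Γ \ S obtained by deleting the edges in S. -/
def delete (S : Set E) : OrGraph V {e // e ∉ S} :=
  ⟨fun e => G.src e.1, fun e => G.tgt e.1⟩

/-- The boundary map ∂ : C₁(Γ,ℤ) → C₀(Γ,ℤ), sending an edge e to t(e) − s(e). -/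
noncomputable def boundary : (E →₀ ℤ) →ₗ[ℤ] (V →₀ ℤ) :=
  Finsupp.lsum ℤ fun e => LinearMap.toSpanSingleton ℤ (V →₀ ℤ)
    (Finsupp.single (G.tgt e) 1 - Finsupp.single (G.src e) 1)

/-- H₁(Γ,ℤ), the kernel of the boundary map inside C₁(Γ,ℤ) = E →₀ ℤ. -/
noncomputable def H1 : Submodule ℤ (E →₀ ℤ) := LinearMap.ker G.boundary

-- abbreviation
abbrev Reach (F : Set E) : V → V → Prop := Relation.ReflTransGen (G.adjOn F)

variable {G}

lemma adjOn_symm {F : Set E} : Symmetric (G.adjOn F) := by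
  rintro v w ⟨e, he, h | h⟩
  exacts [⟨e, he, Or.inr h⟩, ⟨e, he, Or.inl h⟩]

lemma reach_symm {F : Set E} {v w : V} (h : G.Reach F v w) : G.Reach F w v :=
  by haveI : Std.Symm (G.adjOn F) := ⟨fun _ _ h' => adjOn_symm h'⟩
     exact Std.Symm.symm _ _ h

/-- Lemma A : structure of the 2-cut {e,f}. -/
lemma split (hbl : G.Bridgeless) {e f : E}
    (hdis : ¬ G.ConnectedOn ({e, f} : Set E)ᶜ) :
    (∀ v, G.Reach ({e, f} : Set E)ᶜ v (G.src e) ∨ G.Reach ({e, f} : Set E)ᶜ v (G.tgt e)) ∧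
    ¬ G.Reach ({e, f} : Set E)ᶜ (G.src e) (G.tgt e) ∧
    ¬ G.Reach ({e, f} : Set E)ᶜ (G.src f) (G.tgt f) := by
  set R := G.Reach ({e, f} : Set E)ᶜ with hR
  have hstep : ∀ {ed : E} {v w : V}, ed ≠ e → ed ≠ f →
      ((G.src ed = v ∧ G.tgt ed = w) ∨ (G.src ed = w ∧ G.tgt ed = v)) → R v w := by
    intro ed v w h1 h2 h
    exact Relation.ReflTransGen.single ⟨ed, by simp [h1, h2], h⟩
  -- A1
  have A1 : ∀ v, R v (G.src e) ∨ R v (G.tgt e) := by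
    intro v
    have hv : G.Reach ({f} : Set E)ᶜ v (G.src e) := hbl f v (G.src e)
    clear hdis
    induction hv using Relation.ReflTransGen.head_induction_on with
    | refl => exact Or.inl Relation.ReflTransGen.refl
    | head h' _ ih =>
      obtain ⟨ed, hed, hor⟩ := h'
      by_cases hede : ed = e
      · subst hede
        rcases hor with ⟨h1, _⟩ | ⟨_, h2⟩
        · exact Or.inl (h1 ▸ Relation.ReflTransGen.refl)
        · exact Or.inr (h2 ▸ Relation.ReflTransGen.refl)
      · have hst : R _ _ := hstep hede (by simpa using hed) hor
        rcases ih with h | h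
        exacts [Or.inl (hst.trans h), Or.inr (hst.trans h)]
  have A2 : ¬ R (G.src e) (G.tgt e) := by
    intro hst
    apply hdis
    intro v w
    have hv : R v (G.src e) := by
      rcases A1 v with h | h
      exacts [h, h.trans (reach_symm hst)]
    have hw : R w (G.src e) := by
      rcases A1 w with h | h
      exacts [h, h.trans (reach_symm hst)]
    exact hv.trans (reach_symm hw)
  refine ⟨A1, A2, fun hpq => A2 ?_⟩
  -- A3
  have key : ∀ v w, G.Reach ({e} : Set E)ᶜ v w → R v w := by
    intro v w hv
    induction hv using Relation.ReflTransGen.head_induction_on with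
    | refl => exact Relation.ReflTransGen.refl
    | head h' _ ih =>
      obtain ⟨ed, hed, hor⟩ := h'
      by_cases hedf : ed = f
      · subst hedf
        rcases hor with ⟨h1, h2⟩ | ⟨h1, h2⟩
        · exact Relation.ReflTransGen.trans (h1 ▸ h2 ▸ hpq) ih
        · exact Relation.ReflTransGen.trans (h1 ▸ h2 ▸ reach_symm hpq) ih
      · exact Relation.ReflTransGen.trans (hstep (by simpa using hed) hedf hor) ih
  exact key _ _ (hbl e (G.src e) (G.tgt e))

lemma sameC1_refl (e : E) : G.SameC1 e e := Or.inl rfl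

lemma sameC1_symm {e f : E} (h : G.SameC1 e f) : G.SameC1 f e := by
  rcases h with h | h
  · exact Or.inl h.symm
  · exact Or.inr (by rwa [Set.pair_comm f e])

lemma sameC1_trans (hbl : G.Bridgeless) {e f g : E}
    (hef : G.SameC1 e f) (hfg : G.SameC1 f g) : G.SameC1 e g := by
  by_cases heg : e = g
  · exact Or.inl heg
  rcases hef with hef' | hef'
  · exact hef' ▸ hfg
  rcases hfg with hfg' | hfg'
  · exact Or.inr (hfg' ▸ hef')
  -- hef' hfg' hold regardless)
  refine Or.inr ?_
  intro hconn3
  set s := G.src e; set t := G.tgt e; set p := G.src f; set q := G.tgt f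
  obtain ⟨h1all, h1st, h1pq⟩ := split hbl hef'
  obtain ⟨_, h2pq, _⟩ := split hbl hfg'
  set R1 := G.Reach ({e, f} : Set E)ᶜ
  set R2 := G.Reach ({f, g} : Set E)ᶜ
  set R3 := G.Reach ({e, g} : Set E)ᶜ
  have hef2 : e ≠ f := by
    rintro rfl; exact hef' (by simpa [Set.pair_eq_singleton] using hbl e)
  have hfg2 : f ≠ g := by
    rintro rfl; exact hfg' (by simpa [Set.pair_eq_singleton] using hbl f)
  -- the c1/c2 "coordinates"
  have hc1 : ∀ {v w : V}, R1 v w → (R1 v s ↔ R1 w s) :=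
    fun h => ⟨fun h' => (reach_symm h).trans h', fun h' => h.trans h'⟩
  have hc2 : ∀ {v w : V}, R2 v w → (R2 v p ↔ R2 w p) :=
    fun h => ⟨fun h' => (reach_symm h).trans h', fun h' => h.trans h'⟩
  set N : V → Prop := fun v =>
    ((R1 v s ↔ R1 p s) ∧ (R2 v p ↔ R2 p p)) ∨ ((R1 v s ↔ R1 q s) ∧ (R2 v p ↔ R2 q p))
    with hN
  have hR2st : R2 s t :=
    Relation.ReflTransGen.single ⟨e, by simp [hef2, heg], Or.inl ⟨rfl, rfl⟩⟩
  have inv : ∀ v w, R3 v w → ¬ N v → (R1 v s ↔ R1 w s) ∧ (R2 v p ↔ R2 w p) := by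
    intro v w hvw
    induction hvw using Relation.ReflTransGen.head_induction_on with
    | refl => exact fun _ => ⟨Iff.rfl, Iff.rfl⟩
    | @head v' u' h' _ ih =>
      intro hNv
      obtain ⟨ed, hed, hor⟩ := h'
      by_cases hedf : ed = f
      · subst hedf
        exfalso
        rcases hor with ⟨h1, _⟩ | ⟨_, h2⟩
        · exact hNv (Or.inl (h1 ▸ ⟨Iff.rfl, Iff.rfl⟩))
        · exact hNv (Or.inr (h2 ▸ ⟨Iff.rfl, Iff.rfl⟩))
      · have hede : ed ≠ e := by rintro rfl; simp at hed
        have hedg : ed ≠ g := by rintro rfl; simp at hed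
        have hr1 : R1 v' u' := Relation.ReflTransGen.single ⟨ed, by simp [hede, hedf], hor⟩
        have hr2 : R2 v' u' := Relation.ReflTransGen.single ⟨ed, by simp [hedf, hedg], hor⟩
        have e1 := hc1 hr1
        have e2 := hc2 hr2
        have hNu : ¬ N u' := by
          intro hNu
          apply hNv
          rcases hNu with ⟨a1, a2⟩ | ⟨a1, a2⟩
          · exact Or.inl ⟨e1.trans a1, e2.trans a2⟩
          · exact Or.inr ⟨e1.trans a1, e2.trans a2⟩
        obtain ⟨b1, b2⟩ := ih hNu
        exact ⟨e1.trans b1, e2.trans b2⟩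
  have hR1ts : ¬ R1 t s := fun h => h1st (reach_symm h)
  by_cases hNs : N s
  · -- N s holds, show ¬ N t and use path from t to s
    have hc1t : ¬ R1 t s := hR1ts
    have hc2st := hc2 hR2st
    have hR2qp : ¬ R2 q p := fun h => h2pq (reach_symm h)
    have hNt : ¬ N t := by
      rcases hNs with ⟨a1, a2⟩ | ⟨a1, a2⟩
      · -- s in quadrant of p : R1 p s and R2 s p
        have hps : R1 p s := a1.mp Relation.ReflTransGen.refl
        have hsp : R2 s p := a2.mpr Relation.ReflTransGen.refl
        rintro (⟨b1, _⟩ | ⟨_, b2⟩)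
        · exact hc1t (b1.mpr hps)
        · exact hR2qp (b2.mp (hc2st.mp hsp))
      · -- s in quadrant of q : R1 q s and ¬ R2 s p
        have hqs : R1 q s := a1.mp Relation.ReflTransGen.refl
        have hsp : ¬ R2 s p := fun h => hR2qp (a2.mp h)
        rintro (⟨_, b2⟩ | ⟨b1, _⟩)
        · exact hsp (hc2st.mpr (b2.mpr Relation.ReflTransGen.refl))
        · exact hc1t (b1.mpr hqs)
    have := (inv t s (hconn3 t s) hNt).1
    exact hc1t (this.mpr Relation.ReflTransGen.refl)
  · have := (inv s t (hconn3 s t) hNs).1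
    exact hR1ts (this.mp Relation.ReflTransGen.refl)


lemma classOf_eq (hbl : G.Bridgeless) {S : Set E} (hS : G.IsC1Set S) {e : E} (he : e ∈ S) :
    S = {f | G.SameC1 e f} := by
  obtain ⟨a, rfl⟩ := hS
  ext f
  constructor
  · exact fun haf => sameC1_trans hbl (sameC1_symm he) haf
  · exact fun hef => sameC1_trans hbl he hef

end OrGraph

-- Pushforward on 1-chains under a contraction σ_S : Γ → Γ(S): an edge of S maps
-- to itself, an edge not in S is contracted to 0.
open Classical in
noncomputable def projChain {E : Type} (S : Set E) : (E →₀ ℤ) →ₗ[ℤ] ({e // e ∈ S} →₀ ℤ) :=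
  Finsupp.lsum ℤ fun e =>
    if h : e ∈ S then LinearMap.toSpanSingleton ℤ _ (Finsupp.single (⟨e, h⟩ : {e // e ∈ S}) 1)
    else 0

/-- The map on 1-chains induced by an inclusion of edge sets: each edge goes to itself. -/
noncomputable def inclChain {E : Type} (S : Set E) : ({e // e ∈ S} →₀ ℤ) →ₗ[ℤ] (E →₀ ℤ) :=
  Finsupp.lmapDomain ℤ ℤ (Subtype.val : {e // e ∈ S} → E)


section Algebra

open OrGraph

variable {V E : Type}

lemma projChain_apply (S : Set E) (x : E →₀ ℤ) (e : E) (he : e ∈ S) :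
    projChain S x ⟨e, he⟩ = x e := by
  have h : (Finsupp.lapply (⟨e, he⟩ : {e // e ∈ S})).comp (projChain S)
      = (Finsupp.lapply e : (E →₀ ℤ) →ₗ[ℤ] ℤ) := by
    apply Finsupp.lhom_ext
    intro a b
    simp only [LinearMap.comp_apply, projChain, Finsupp.lsum_single, Finsupp.lapply_apply]
    by_cases h : a ∈ S
    · rw [dif_pos h]
      by_cases hae : a = e
      · subst hae; simp
      · have : (⟨a, h⟩ : {e // e ∈ S}) ≠ ⟨e, he⟩ := by simpa [Subtype.ext_iff] using hae
        simp [Finsupp.single_apply, this, hae]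
    · rw [dif_neg h]
      have : a ≠ e := fun hae => h (hae ▸ he)
      simp [Finsupp.single_apply, this]
  exact LinearMap.congr_fun h x

lemma proj_boundary (G : OrGraph V E) (S : Set E) :
    (G.contract S).boundary ∘ₗ projChain S
      = (Finsupp.lmapDomain ℤ ℤ (Quot.mk (G.compRel S))) ∘ₗ G.boundary := by
  apply Finsupp.lhom_ext
  intro a b
  simp only [LinearMap.comp_apply, projChain, OrGraph.boundary, Finsupp.lsum_single,
    LinearMap.toSpanSingleton_apply]
  by_cases h : a ∈ S
  · rw [dif_pos h]
    simp only [LinearMap.toSpanSingleton_apply, map_smul, map_sub, Finsupp.lsum_single,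
      Finsupp.lmapDomain_apply, Finsupp.mapDomain_single, smul_sub]
    simp [OrGraph.contract]
  · rw [dif_neg h]
    have hq : Quot.mk (G.compRel S) (G.src a) = Quot.mk (G.compRel S) (G.tgt a) :=
      Quot.sound ⟨a, h, Or.inl ⟨rfl, rfl⟩⟩
    simp [map_smul, map_sub, Finsupp.lmapDomain_apply, Finsupp.mapDomain_single, hq]

lemma projChain_mem_H1 (G : OrGraph V E) (S : Set E) {x : E →₀ ℤ} (hx : x ∈ G.H1) :
    projChain S x ∈ (G.contract S).H1 := by
  have hx0 : G.boundary x = 0 := hx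
  have := LinearMap.congr_fun (proj_boundary G S) x
  simp only [LinearMap.comp_apply, hx0, map_zero] at this
  exact this

end Algebra


section Maps

variable {V E : Type} (G : OrGraph V E)

/-- The map β : ⊕_S H₁(Γ(S)) → C₁(Γ). -/
noncomputable def betaMap [DecidableEq {S : Set E // G.IsC1Set S}] :
    DirectSum {S : Set E // G.IsC1Set S} (fun S => ↥(G.contract S.1).H1) →ₗ[ℤ] (E →₀ ℤ) :=
  DirectSum.toModule ℤ {S : Set E // G.IsC1Set S} (E →₀ ℤ)
    fun S => (inclChain S.1).comp ((G.contract S.1).H1.subtype)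

lemma betaMap_of [DecidableEq {S : Set E // G.IsC1Set S}]
    (S : {S : Set E // G.IsC1Set S}) (y : ↥(G.contract S.1).H1) :
    betaMap G (DirectSum.of (fun S : {S : Set E // G.IsC1Set S} => ↥(G.contract S.1).H1) S y)
      = inclChain S.1 y.1 := by
  have h := DirectSum.toModule_lof (R := ℤ) (ι := {S : Set E // G.IsC1Set S})
    (M := fun S => ↥(G.contract S.1).H1) (N := E →₀ ℤ)
    (φ := fun S => (inclChain S.1).comp ((G.contract S.1).H1.subtype)) S y
  exact h

/-- evaluation of β at an edge lying in a C1-set: only that C1-set contributes. -/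
lemma betaMap_eval [Finite E] [DecidableEq {S : Set E // G.IsC1Set S}] (hbl : G.Bridgeless)
    (y : DirectSum {S : Set E // G.IsC1Set S} (fun S => ↥(G.contract S.1).H1))
    (S : {S : Set E // G.IsC1Set S}) (e : E) (he : e ∈ S.1) :
    (betaMap G y) e = ((y S : ↥(G.contract S.1).H1) : {e // e ∈ S.1} →₀ ℤ) ⟨e, he⟩ := by
  have huniq : ∀ (S' : {S : Set E // G.IsC1Set S}), e ∈ S'.1 → S' = S := by
    intro S' he'
    exact Subtype.ext ((OrGraph.classOf_eq hbl S'.2 he').trans (OrGraph.classOf_eq hbl S.2 he).symm)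
  have h : (Finsupp.lapply e).comp (betaMap G)
      = (Finsupp.lapply (⟨e, he⟩ : {e // e ∈ S.1})).comp
          (((G.contract S.1).H1.subtype).comp
            (DirectSum.component ℤ {S : Set E // G.IsC1Set S}
              (fun S => ↥(G.contract S.1).H1) S)) := by
    apply DirectSum.linearMap_ext
    intro S'
    apply LinearMap.ext
    intro z
    simp only [LinearMap.comp_apply]
    rw [show (DirectSum.lof ℤ {S : Set E // G.IsC1Set S} (fun S => ↥(G.contract S.1).H1) S') z
        = DirectSum.of (fun S : {S : Set E // G.IsC1Set S} => ↥(G.contract S.1).H1) S' z from rfl]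
    rw [betaMap_of]
    by_cases hS' : S' = S
    · subst hS'
      rw [← DirectSum.lof_eq_of ℤ, DirectSum.component.lof_self]
      simp only [inclChain, Finsupp.lapply_apply, Finsupp.lmapDomain_apply,
        Submodule.coe_subtype]
      simpa using Finsupp.mapDomain_apply Subtype.val_injective z.1 ⟨e, he⟩
    · have hnot : e ∉ S'.1 := fun he' => hS' (huniq S' he')
      rw [← DirectSum.lof_eq_of ℤ, DirectSum.component.of, dif_neg hS']
      simp only [inclChain, Finsupp.lapply_apply, Finsupp.lmapDomain_apply, map_zero,
        Submodule.coe_zero, Finsupp.coe_zero, Pi.zero_apply]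
      apply Finsupp.mapDomain_notin_range
      rwa [Subtype.range_coe]
  exact LinearMap.congr_fun h y

end Maps

/-- Let Γ be a finite oriented connected graph free from separating edges.
Then the inclusion H₁(Γ,ℤ) ⊆ C₁(Γ,ℤ) factors as an injection
H₁(Γ,ℤ) ↪ ⊕_{S ∈ Set¹Γ} H₁(Γ(S),ℤ) followed by an injection
⊕_{S ∈ Set¹Γ} H₁(Γ(S),ℤ) ↪ C₁(Γ,ℤ); the first map is the direct sum of the pushforwards
under the contractions σ_S, and the second sends each edge of Γ(S) (an element of S) to
itself. -/
theorem stmt5 {V E : Type} [Finite V] [Finite E] (G : OrGraph V E)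
    [DecidableEq {S : Set E // G.IsC1Set S}]
    (hconn : G.Connected) (hbl : G.Bridgeless) :
    ∃ α : ↥G.H1 →ₗ[ℤ] DirectSum {S : Set E // G.IsC1Set S}
        (fun S => ↥(G.contract S.1).H1),
      ∃ β : DirectSum {S : Set E // G.IsC1Set S}
          (fun S => ↥(G.contract S.1).H1) →ₗ[ℤ] (E →₀ ℤ),
        Function.Injective α ∧ Function.Injective β ∧
        (∀ (x : ↥G.H1) (S : {S : Set E // G.IsC1Set S}),
          ((α x) S : {e // e ∈ S.1} →₀ ℤ) = projChain S.1 x.1) ∧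
        (∀ (S : {S : Set E // G.IsC1Set S}) (y : ↥(G.contract S.1).H1),
          β (DirectSum.of (fun S => ↥(G.contract S.1).H1) S y) = inclChain S.1 y.1) ∧
        (∀ x : ↥G.H1, β (α x) = x.1) := by
  classical
  letI : Fintype {S : Set E // G.IsC1Set S} := Fintype.ofFinite _
  let P : ∀ S : {S : Set E // G.IsC1Set S}, ↥G.H1 →ₗ[ℤ] ↥(G.contract S.1).H1 := fun S =>
    LinearMap.codRestrict _ ((projChain S.1).comp G.H1.subtype)
      (fun x => projChain_mem_H1 G S.1 x.2)
  let eqv := DirectSum.linearEquivFunOnFintype ℤ {S : Set E // G.IsC1Set S}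
      (fun S => ↥(G.contract S.1).H1)
  let α : ↥G.H1 →ₗ[ℤ] DirectSum {S : Set E // G.IsC1Set S} (fun S => ↥(G.contract S.1).H1) :=
    (eqv.symm : (∀ S : {S : Set E // G.IsC1Set S}, ↥(G.contract S.1).H1) →ₗ[ℤ] _).comp
      (LinearMap.pi P)
  have hα : ∀ (x : ↥G.H1) (S : {S : Set E // G.IsC1Set S}),
      ((α x) S : {e // e ∈ S.1} →₀ ℤ) = projChain S.1 x.1 := by
    intro x S
    have h1 : eqv (α x) = LinearMap.pi P x := eqv.apply_symm_apply _
    have h2 : (α x) S = P S x := congrFun h1 S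
    rw [h2]; rfl
  let classOf : E → {S : Set E // G.IsC1Set S} := fun e => ⟨{f | G.SameC1 e f}, ⟨e, rfl⟩⟩
  have hmem : ∀ e, e ∈ (classOf e).1 := fun e => OrGraph.sameC1_refl e
  have hβα : ∀ x : ↥G.H1, betaMap G (α x) = x.1 := by
    intro x
    ext e
    rw [betaMap_eval G hbl (α x) (classOf e) e (hmem e), hα x (classOf e)]
    exact projChain_apply _ x.1 e (hmem e)
  refine ⟨α, betaMap G, ?_, ?_, hα, betaMap_of G, hβα⟩
  · intro x y hxy
    apply Subtype.ext
    rw [← hβα x, ← hβα y, hxy]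
  · have h0 : ∀ y, betaMap G y = 0 → y = 0 := by
      intro y hy
      apply DFinsupp.ext
      intro S
      apply Subtype.ext
      ext a
      have h := betaMap_eval G hbl y S a.1 a.2
      rw [hy] at h
      simpa using h.symm
    intro y z hyz
    have h := h0 (y - z) (by rw [map_sub, hyz, sub_self])
    exact sub_eq_zero.mp h
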